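/- Let A and H be groups, φ : A →* H an injective homomorphism, n : ℕ, and let G = Monoid.PushoutI (fun _ : Fin n => φ) be the star of isomorphic groups with n rays, with ray-permuting homomorphisms Φ σ : G →* G for σ : Equiv.Perm (Fin n). Suppose g ∈ G admits a reduced word datum of length ≥ 1 in which every index i : Fin n is represented. If σ : Equiv.Perm (Fin n) satisfies Φ σ g = g, then σ = 1. -/

import Mathlib

open Monoid

/-- A reduced word datum of length `l.length` for an element `g` of the star of isomorphic
groups `Monoid.PushoutI (fun _ : Fin n => φ)`. -/
def IsReducedDatum {A H : Type*} [Group A] [Group H] {n : ℕ} (φ : A →* H)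
    (g : Monoid.PushoutI (fun _ : Fin n => φ)) (a : A) (l : List (Fin n × H)) : Prop :=
  (∀ p ∈ l, p.2 ∉ Set.range φ) ∧
  l.Chain' (fun p q => p.1 ≠ q.1) ∧
  g = Monoid.PushoutI.base (fun _ : Fin n => φ) a *
      (l.map fun p => Monoid.PushoutI.of (φ := fun _ : Fin n => φ) p.1 p.2).prod


namespace StarAux

variable {A H : Type*} [Group A] [Group H] {n : ℕ} (φ : A →* H)

/-- The `CoprodI.Word` associated to a list of letters from a reduced datum. -/
def toWord (l : List (Fin n × H))
    (h1 : ∀ p ∈ l, p.2 ∉ Set.range φ)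
    (h2 : l.Chain' (fun p q => p.1 ≠ q.1)) :
    Monoid.CoprodI.Word (fun _ : Fin n => H) where
  toList := l.map fun p => ⟨p.1, p.2⟩
  ne_one := by
    intro g hg
    simp only [List.mem_map] at hg
    obtain ⟨p, hp, rfl⟩ := hg
    intro hg1
    exact h1 p hp ⟨1, by simpa using hg1.symm⟩
  chain_ne := by
    rw [List.isChain_map]
    exact h2

theorem toWord_reduced (l : List (Fin n × H))
    (h1 : ∀ p ∈ l, p.2 ∉ Set.range φ)
    (h2 : l.Chain' (fun p q => p.1 ≠ q.1)) :
    PushoutI.Reduced (fun _ : Fin n => φ) (toWord φ l h1 h2) := by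
  intro g hg
  simp only [toWord, List.mem_map] at hg
  obtain ⟨p, hp, rfl⟩ := hg
  intro hr
  obtain ⟨x, hx⟩ := hr
  exact h1 p hp ⟨x, hx⟩

theorem ofCoprodI_toWord_prod (l : List (Fin n × H))
    (h1 : ∀ p ∈ l, p.2 ∉ Set.range φ)
    (h2 : l.Chain' (fun p q => p.1 ≠ q.1)) :
    PushoutI.ofCoprodI (toWord φ l h1 h2).prod
      = (l.map fun p => Monoid.PushoutI.of (φ := fun _ : Fin n => φ) p.1 p.2).prod := by
  simp only [toWord, CoprodI.Word.prod, map_list_prod, List.map_map]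
  rfl

/-- Uniqueness of the sequence of indices of a reduced datum. -/
theorem map_fst_eq (hφ : Function.Injective φ)
    (g : Monoid.PushoutI (fun _ : Fin n => φ)) (a₁ a₂ : A) (l₁ l₂ : List (Fin n × H))
    (h₁ : IsReducedDatum φ g a₁ l₁) (h₂ : IsReducedDatum φ g a₂ l₂) :
    l₁.map Prod.fst = l₂.map Prod.fst := by
  classical
  obtain ⟨d⟩ := Monoid.PushoutI.NormalWord.transversal_nonempty (fun _ : Fin n => φ) (fun _ => hφ)
  obtain ⟨hr₁, hc₁, hp₁⟩ := h₁
  obtain ⟨hr₂, hc₂, hp₂⟩ := h₂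
  obtain ⟨w₁, hw₁prod, hw₁map⟩ :=
    (toWord_reduced φ l₁ hr₁ hc₁).exists_normalWord_prod_eq d
  obtain ⟨w₂, hw₂prod, hw₂map⟩ :=
    (toWord_reduced φ l₂ hr₂ hc₂).exists_normalWord_prod_eq d
  have key : (a₁ • w₁) = (a₂ • w₂) := by
    apply PushoutI.NormalWord.prod_injective
    rw [PushoutI.NormalWord.prod_base_smul, PushoutI.NormalWord.prod_base_smul,
      hw₁prod, hw₂prod, ofCoprodI_toWord_prod, ofCoprodI_toWord_prod, ← hp₁, ← hp₂]
  have hlist : w₁.toList = w₂.toList := congrArg (fun w => w.toList) key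
  have e₁ : (toWord φ l₁ hr₁ hc₁).toList.map Sigma.fst = l₁.map Prod.fst := by
    simp [toWord, List.map_map, Function.comp]
  have e₂ : (toWord φ l₂ hr₂ hc₂).toList.map Sigma.fst = l₂.map Prod.fst := by
    simp [toWord, List.map_map, Function.comp]
  rw [← e₁, ← e₂, ← hw₁map, ← hw₂map, hlist]

end StarAux

/-- The action of the symmetric group on the set of reduced words in which every factor
subgroup is represented is free (Section 3.2 of the paper): if `g` is a reduced word of
length `≥ 1` in which every index is represented and `Φ σ g = g`, then `σ = 1`. -/
theorem perm_action_free_on_full_support_words {A H : Type*} [Group A] [Group H]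
    (φ : A →* H) (hφ : Function.Injective φ) (n : ℕ)
    (Φ : Equiv.Perm (Fin n) →
      (Monoid.PushoutI (fun _ : Fin n => φ) →* Monoid.PushoutI (fun _ : Fin n => φ)))
    (hΦ : ∀ (σ : Equiv.Perm (Fin n)) (i : Fin n),
      (Φ σ).comp (Monoid.PushoutI.of (φ := fun _ : Fin n => φ) i) =
        Monoid.PushoutI.of (φ := fun _ : Fin n => φ) (σ i))
    (g : Monoid.PushoutI (fun _ : Fin n => φ)) (a : A) (l : List (Fin n × H))
    (hlen : 1 ≤ l.length)
    (hred : IsReducedDatum φ g a l)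
    (hrep : ∀ i : Fin n, ∃ p ∈ l, p.1 = i)
    (σ : Equiv.Perm (Fin n)) (hσ : Φ σ g = g) :
    σ = 1 := by
  rcases n.eq_zero_or_pos with rfl | hn
  · exact Subsingleton.elim σ 1
  obtain ⟨hr, hc, hp⟩ := hred
  obtain ⟨i₀⟩ : Nonempty (Fin n) := ⟨⟨0, hn⟩⟩
  -- Φ σ fixes the base group pointwise
  have hbase : ∀ b : A, Φ σ (Monoid.PushoutI.base (fun _ : Fin n => φ) b)
      = Monoid.PushoutI.base (fun _ : Fin n => φ) b := by
    intro b
    have h1 : Monoid.PushoutI.base (fun _ : Fin n => φ) b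
        = Monoid.PushoutI.of (φ := fun _ : Fin n => φ) i₀ (φ b) :=
      (Monoid.PushoutI.of_apply_eq_base (fun _ : Fin n => φ) i₀ b).symm
    have h2 := DFunLike.congr_fun (hΦ σ i₀) (φ b)
    simp only [MonoidHom.comp_apply] at h2
    rw [h1, h2, Monoid.PushoutI.of_apply_eq_base, Monoid.PushoutI.of_apply_eq_base]
  -- the permuted datum is also a reduced datum for g
  have hred' : IsReducedDatum φ g a (l.map fun p => (σ p.1, p.2)) := by
    refine ⟨?_, ?_, ?_⟩
    · intro p hp'
      simp only [List.mem_map] at hp'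
      obtain ⟨q, hq, rfl⟩ := hp'
      exact hr q hq
    · refine (List.isChain_map _).2 ?_
      exact hc.imp fun p q h hpq => h (σ.injective hpq)
    · conv_lhs => rw [← hσ]
      rw [hp, map_mul, hbase, List.map_map, map_list_prod, List.map_map]
      congr 1
      refine congrArg (fun t : List (Monoid.PushoutI (fun _ : Fin n => φ)) => t.prod) (List.map_congr_left ?_)
      intro p _
      have := DFunLike.congr_fun (hΦ σ p.1) p.2
      simpa using this
  have hmap := StarAux.map_fst_eq φ hφ g a a l (l.map fun p => (σ p.1, p.2))
    ⟨hr, hc, hp⟩ hred'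
  rw [List.map_map] at hmap
  have hfix : ∀ p ∈ l, p.1 = σ p.1 := by
    rw [List.map_eq_map_iff] at hmap
    intro p hp'
    exact hmap p hp'
  ext i
  obtain ⟨p, hpl, rfl⟩ := hrep i
  exact congrArg Fin.val (hfix p hpl).symm
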